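/- arXiv:2207.05177 — 5 statements merged into one kernel-verified Lean document; each statement's English description precedes it below -/
import Mathlib

section
/- The derivative of Φ(β) = 2π − 2·arccos((β−1)/(β+1)) − arccos((1−6β+β²)/(1+β)²) vanishes for all β in (0,1). -/
open Real

theorem phi_deriv_zero (β : ℝ) (hβ0 : 0 < β) (hβ1 : β < 1) :
    HasDerivAt (fun b : ℝ =>
      2 * π - 2 * arccos ((b - 1) / (b + 1)) -
        arccos ((1 - 6 * b + b ^ 2) / (1 + b) ^ 2)) 0 β := by
  have hden : β + 1 ≠ 0 := by linarith
  have hden' : (1 + β) ≠ 0 := by linarith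
  have hs : (0:ℝ) < Real.sqrt β := Real.sqrt_pos.2 hβ0
  set s := Real.sqrt β with hsdef
  have hs2 : s ^ 2 = β := Real.sq_sqrt hβ0.le
  -- inner function 1
  have hf : HasDerivAt (fun b : ℝ => (b - 1) / (b + 1))
      ((1 * (β + 1) - (β - 1) * 1) / (β + 1) ^ 2) β := by
    exact HasDerivAt.div ((hasDerivAt_id β).sub_const 1) ((hasDerivAt_id β).add_const 1) hden
  -- inner function 2
  have hg : HasDerivAt (fun b : ℝ => (1 - 6 * b + b ^ 2) / (1 + b) ^ 2)
      (((-6 + 2 * β) * (1 + β) ^ 2 - (1 - 6 * β + β ^ 2) * (2 * (1 + β))) / ((1 + β) ^ 2) ^ 2)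
      β := by
    have h1 : HasDerivAt (fun b : ℝ => 1 - 6 * b + b ^ 2) (-6 + 2 * β) β := by
      have := (((hasDerivAt_id β).const_mul 6).const_sub 1).add ((hasDerivAt_id β).pow 2)
      convert this using 1
      · rfl
      · rfl
      · funext b; simp only [Pi.add_apply, Pi.pow_apply, id]
      · simp only [id]; norm_num
    have h2 : HasDerivAt (fun b : ℝ => (1 + b) ^ 2) ((2:ℕ) * (1 + β) ^ (2 - 1) * 1) β :=
      ((hasDerivAt_id β).const_add 1).pow 2
    have h2' : HasDerivAt (fun b : ℝ => (1 + b) ^ 2) (2 * (1 + β)) β := by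
      simpa using h2
    exact h1.div h2' (pow_ne_zero 2 hden')
  -- arccos bounds for f
  have hfv : (β - 1) / (β + 1) ≠ -1 := by
    intro h; rw [div_eq_iff hden] at h; nlinarith
  have hfv' : (β - 1) / (β + 1) ≠ 1 := by
    intro h; rw [div_eq_iff hden] at h; nlinarith
  have hgv : (1 - 6 * β + β ^ 2) / (1 + β) ^ 2 ≠ -1 := by
    intro h; rw [div_eq_iff (pow_ne_zero 2 hden')] at h; nlinarith
  have hgv' : (1 - 6 * β + β ^ 2) / (1 + β) ^ 2 ≠ 1 := by
    intro h; rw [div_eq_iff (pow_ne_zero 2 hden')] at h; nlinarith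
  -- sqrt computations
  have hsqf : Real.sqrt (1 - ((β - 1) / (β + 1)) ^ 2) = 2 * s / (β + 1) := by
    have h1 : 1 - ((β - 1) / (β + 1)) ^ 2 = (2 * s / (β + 1)) ^ 2 := by
      field_simp
      nlinarith [hs2]
    rw [h1, Real.sqrt_sq (by positivity)]
  have hsqg : Real.sqrt (1 - ((1 - 6 * β + β ^ 2) / (1 + β) ^ 2) ^ 2)
      = 4 * s * (1 - β) / (1 + β) ^ 2 := by
    have h1 : 1 - ((1 - 6 * β + β ^ 2) / (1 + β) ^ 2) ^ 2
        = (4 * s * (1 - β) / (1 + β) ^ 2) ^ 2 := by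
      field_simp
      nlinarith [hs2]
    rw [h1, Real.sqrt_sq (div_nonneg (by nlinarith [hs.le]) (by positivity))]
  have harcf := (Real.hasDerivAt_arccos hfv hfv').comp β hf
  have harcg := (Real.hasDerivAt_arccos hgv hgv').comp β hg
  have hfinal := ((harcf.const_mul 2).const_sub (2 * π)).sub harcg
  convert hfinal using 1
  · rfl
  · rfl
  · rfl
  rw [hsqf, hsqg]
  have h1β : (1:ℝ) - β ≠ 0 := by linarith
  field_simp
  nlinarith [hs2, hs.ne']
end

section
/- Let β > 0 and h > 2√β. For the solution x(t) = β + (1−β)cos t − h sin t, y(t) = −h cos t + (β−1) sin t of ẋ = y, ẏ = −x+β starting at (1,−h), the time t_C = arccos((h√(h²−4β) − 1 + β²)/(h² + (β−1)²)) satisfies x(t_C) = −1, provided the argument of arccos lies in [−1,1]. -/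
open Real

theorem central_flight_time_reaches_left_line (β h : ℝ) (hβ : 0 < β)
    (hh : 2 * Real.sqrt β < h)
    (hz1 : -1 ≤ (h * Real.sqrt (h ^ 2 - 4 * β) - 1 + β ^ 2) / (h ^ 2 + (β - 1) ^ 2))
    (hz2 : (h * Real.sqrt (h ^ 2 - 4 * β) - 1 + β ^ 2) / (h ^ 2 + (β - 1) ^ 2) ≤ 1) :
    β + (1 - β) * Real.cos (arccos
        ((h * Real.sqrt (h ^ 2 - 4 * β) - 1 + β ^ 2) / (h ^ 2 + (β - 1) ^ 2)))
      - h * Real.sin (arccos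
        ((h * Real.sqrt (h ^ 2 - 4 * β) - 1 + β ^ 2) / (h ^ 2 + (β - 1) ^ 2))) = -1 := by
  have hsb : (0:ℝ) ≤ Real.sqrt β := Real.sqrt_nonneg β
  have hsbpos : 0 < Real.sqrt β := Real.sqrt_pos.2 hβ
  have hhpos : 0 < h := lt_trans (by linarith) hh
  have hsq : (2 * Real.sqrt β) ^ 2 = 4 * β := by
    have : Real.sqrt β ^ 2 = β := Real.sq_sqrt hβ.le
    nlinarith
  have hb4 : 4 * β < h ^ 2 := by nlinarith
  set s := Real.sqrt (h ^ 2 - 4 * β) with hs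
  have hs2 : s ^ 2 = h ^ 2 - 4 * β := Real.sq_sqrt (by linarith)
  set D := h ^ 2 + (β - 1) ^ 2 with hD
  have hDpos : 0 < D := by positivity
  set z := (h * s - 1 + β ^ 2) / D with hzdef
  set a := h * s - 1 + β ^ 2 with ha
  have key2 : h ^ 2 * (D ^ 2 - a ^ 2) = ((β + 1) * D + (1 - β) * a) ^ 2 := by
    rw [ha, hD]
    linear_combination (-(h ^ 2) * (h ^ 2 + (β - 1) ^ 2)) * hs2
  have hza : z * D = a := by rw [hzdef, div_mul_cancel₀ a hDpos.ne']
  have key : 1 - z ^ 2 = ((β + 1 + (1 - β) * z) / h) ^ 2 := by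
    have h1 : h ^ 2 * (D ^ 2 - (z * D) ^ 2) = ((β + 1) * D + (1 - β) * (z * D)) ^ 2 := by
      rw [hza]; exact key2
    have hD2 : (D:ℝ) ^ 2 ≠ 0 := pow_ne_zero 2 hDpos.ne'
    have key' : ((1 - z ^ 2) * h ^ 2) * D ^ 2 = ((β + 1 + (1 - β) * z) ^ 2) * D ^ 2 := by
      linear_combination h1
    have key'' := mul_right_cancel₀ hD2 key'
    field_simp
    linarith [key'']
  have hnn : 0 ≤ (β + 1 + (1 - β) * z) / h := by
    apply div_nonneg _ hhpos.le
    nlinarith [hz1, hz2]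
  rw [Real.cos_arccos hz1 hz2, Real.sin_arccos]
  rw [key, Real.sqrt_sq hnn]
  field_simp
  ring
end

section
/- Let β ∈ (0,1) and 0 < h < 2√β. For the solution x(t) = β + (1−β)cos t − h sin t, y(t) = −h cos t + (β−1) sin t of ẋ = y, ẏ = −x+β starting at (1,−h), the time t_C = 2π − arccos((1−h²−2β+β²)/(h²+(β−1)²)) satisfies x(t_C) = 1 and y(t_C) = h. -/
open Real

theorem central_return_time_two_zones (β h : ℝ) (hβ0 : 0 < β) (hβ1 : β < 1)
    (hh0 : 0 < h) (hh1 : h < 2 * Real.sqrt β) :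
    (β + (1 - β) * Real.cos (2 * π - arccos
        ((1 - h ^ 2 - 2 * β + β ^ 2) / (h ^ 2 + (β - 1) ^ 2)))
      - h * Real.sin (2 * π - arccos
        ((1 - h ^ 2 - 2 * β + β ^ 2) / (h ^ 2 + (β - 1) ^ 2))) = 1) ∧
    (-h * Real.cos (2 * π - arccos
        ((1 - h ^ 2 - 2 * β + β ^ 2) / (h ^ 2 + (β - 1) ^ 2)))
      + (β - 1) * Real.sin (2 * π - arccos
        ((1 - h ^ 2 - 2 * β + β ^ 2) / (h ^ 2 + (β - 1) ^ 2))) = h) := by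
  have h1β : (0:ℝ) < 1 - β := by linarith
  set D : ℝ := h ^ 2 + (β - 1) ^ 2 with hD
  have hDpos : 0 < D := by positivity
  set c : ℝ := (1 - h ^ 2 - 2 * β + β ^ 2) / D with hc
  have hc1 : -1 ≤ c := by
    rw [hc, le_div_iff₀ hDpos]
    nlinarith [sq_nonneg (β - 1), sq_nonneg h]
  have hc2 : c ≤ 1 := by
    rw [hc, div_le_one hDpos]
    nlinarith [sq_nonneg h]
  have hcos : Real.cos (Real.arccos c) = c := Real.cos_arccos hc1 hc2
  have hsin : Real.sin (Real.arccos c) = 2 * h * (1 - β) / D := by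
    rw [Real.sin_arccos]
    have h1 : 1 - c ^ 2 = (2 * h * (1 - β) / D) ^ 2 := by
      rw [hc]
      field_simp
      ring
    rw [h1]
    exact Real.sqrt_sq (by positivity)
  have hC : Real.cos (2 * π - Real.arccos c) = c := by
    rw [Real.cos_sub, Real.cos_two_pi, Real.sin_two_pi, hcos]; ring
  have hS : Real.sin (2 * π - Real.arccos c) = -(2 * h * (1 - β) / D) := by
    rw [Real.sin_sub, Real.cos_two_pi, Real.sin_two_pi, hsin]; ring
  rw [hC, hS, hc]
  constructor
  · field_simp
    ring
  · field_simp
    ring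
end

section
/- Let ω > 0, b > 0, a, τ be reals with ω² = a² + b·c for some c, and let h ∈ (0,τ) with τ > 0. Define x(t) = −(e^{−tω}/(2ω))(b h − b e^{2tω} h − 2 e^{tω} ω + bτ − 2b e^{tω} τ + b e^{2tω} τ). Then x(0) = 1 and x(t_R) = 1 where t_R = (1/ω)·log((h+τ)/(τ−h)). -/
open Real

theorem right_zone_flight_time (ω b a τ h : ℝ) (hω : 0 < ω) (hb : 0 < b)
    (hsaddle : ∃ c : ℝ, ω ^ 2 = a ^ 2 + b * c) (hτ : 0 < τ)
    (hh0 : 0 < h) (hh1 : h < τ) :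
    (-(Real.exp (-(0:ℝ) * ω) / (2 * ω)) *
        (b * h - b * Real.exp (2 * 0 * ω) * h - 2 * Real.exp ((0:ℝ) * ω) * ω +
          b * τ - 2 * b * Real.exp ((0:ℝ) * ω) * τ + b * Real.exp (2 * 0 * ω) * τ) = 1) ∧
    (-(Real.exp (-((1 / ω) * Real.log ((h + τ) / (τ - h))) * ω) / (2 * ω)) *
        (b * h - b * Real.exp (2 * ((1 / ω) * Real.log ((h + τ) / (τ - h))) * ω) * h -
          2 * Real.exp (((1 / ω) * Real.log ((h + τ) / (τ - h))) * ω) * ω +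
          b * τ - 2 * b * Real.exp (((1 / ω) * Real.log ((h + τ) / (τ - h))) * ω) * τ +
          b * Real.exp (2 * ((1 / ω) * Real.log ((h + τ) / (τ - h))) * ω) * τ) = 1) := by
  have hωne : ω ≠ 0 := ne_of_gt hω
  have hpos : 0 < (h + τ) / (τ - h) := div_pos (by linarith) (by linarith)
  have hE : Real.exp (Real.log ((h + τ) / (τ - h))) = (h + τ) / (τ - h) :=
    Real.exp_log hpos
  constructor
  · simp
    field_simp
    ring
  · set L := Real.log ((h + τ) / (τ - h)) with hL
    have h1 : (1 / ω) * L * ω = L := by field_simp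
    have h2 : 2 * ((1 / ω) * L) * ω = L + L := by field_simp; ring
    have h3 : -((1 / ω) * L) * ω = -L := by field_simp
    rw [h1, h2, h3, Real.exp_add, Real.exp_neg, hE]
    have hne : τ - h ≠ 0 := by linarith
    field_simp
    ring
end

section
/- The equation λ₁(β) = 2(β−1)√β − (1 + (β−6)β)·arccos((β−1)/(β+1)) = 0 has a unique solution β* in the interval (0,1], and β* ≈ 0.23031022687 (in particular β* ∈ (0.23, 0.231)). -/
open Real

noncomputable def lamOne (x : ℝ) : ℝ :=
  2 * (x - 1) * Real.sqrt x - (1 + (x - 6) * x) * arccos ((x - 1) / (x + 1))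

lemma lamOne_continuousOn : ContinuousOn lamOne (Set.Icc (0:ℝ) 1) := by
  apply ContinuousOn.sub
  · exact (continuous_const.mul (continuous_id.sub continuous_const)).continuousOn.mul
      continuous_sqrt.continuousOn
  · apply ContinuousOn.mul
    · fun_prop
    · apply Real.continuous_arccos.comp_continuousOn
      apply ContinuousOn.div
      · fun_prop
      · fun_prop
      · intro x hx
        have := hx.1
        intro h; linarith [h]

lemma deriv_alg {s x : ℝ} (hs2 : s ^ 2 = x) (hspos : 0 < s) (A : ℝ) :
    (2 * 1 * s + 2 * (x - 1) * (1 / (2 * s))) -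
      ((1 * x + (x - 6) * 1) * A +
        (1 + (x - 6) * x) * ((-(1 / (2 * s / (x + 1)))) * ((1 * (x + 1) - (x - 1) * 1) / (x + 1) ^ 2)))
      = 4 * s * (x - 1) / (x + 1) + (6 - 2 * x) * A := by
  have hx1 : (0:ℝ) < x + 1 := by nlinarith
  subst hs2
  field_simp
  ring

lemma lamOne_hasDerivAt {x : ℝ} (hx0 : 0 < x) (hx1 : x < 1) :
    HasDerivAt lamOne
      (4 * Real.sqrt x * (x - 1) / (x + 1) + (6 - 2 * x) * arccos ((x - 1) / (x + 1))) x := by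
  have hxne : x ≠ 0 := ne_of_gt hx0
  have hx1p : (0:ℝ) < x + 1 := by linarith
  have hx1ne : x + 1 ≠ 0 := ne_of_gt hx1p
  have hs : 0 < Real.sqrt x := Real.sqrt_pos.mpr hx0
  have hsne : Real.sqrt x ≠ 0 := ne_of_gt hs
  have hs2 : Real.sqrt x ^ 2 = x := Real.sq_sqrt hx0.le
  set u : ℝ := (x - 1) / (x + 1) with hu
  have hu1 : u ≠ -1 := by
    rw [hu]; intro h; rw [div_eq_iff hx1ne] at h; linarith
  have hu2 : u ≠ 1 := by
    rw [hu]; intro h; rw [div_eq_iff hx1ne] at h; linarith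
  -- derivative of inner function
  have hinner : HasDerivAt (fun y : ℝ => (y - 1) / (y + 1))
      ((1 * (x + 1) - (x - 1) * 1) / (x + 1) ^ 2) x := by
    exact HasDerivAt.div ((hasDerivAt_id x).sub_const 1) ((hasDerivAt_id x).add_const 1) hx1ne
  have harc : HasDerivAt (fun y : ℝ => arccos ((y - 1) / (y + 1)))
      ((-(1 / Real.sqrt (1 - u ^ 2))) * ((1 * (x + 1) - (x - 1) * 1) / (x + 1) ^ 2)) x :=
    by have := (Real.hasDerivAt_arccos hu1 hu2).comp x hinner; exact this
  have hterm1 : HasDerivAt (fun y : ℝ => 2 * (y - 1) * Real.sqrt y)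
      (2 * 1 * Real.sqrt x + 2 * (x - 1) * (1 / (2 * Real.sqrt x))) x := by
    exact HasDerivAt.mul ((((hasDerivAt_id x).sub_const 1)).const_mul 2)
      (Real.hasDerivAt_sqrt hxne)
  have hpoly : HasDerivAt (fun y : ℝ => 1 + (y - 6) * y) (1 * x + (x - 6) * 1) x := by
    exact (HasDerivAt.mul ((hasDerivAt_id x).sub_const 6) (hasDerivAt_id x)).const_add 1
  have hterm2 : HasDerivAt (fun y : ℝ => (1 + (y - 6) * y) * arccos ((y - 1) / (y + 1)))
      ((1 * x + (x - 6) * 1) * arccos u +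
        (1 + (x - 6) * x) * ((-(1 / Real.sqrt (1 - u ^ 2))) * ((1 * (x + 1) - (x - 1) * 1) / (x + 1) ^ 2))) x :=
    HasDerivAt.mul hpoly harc
  have h := hterm1.sub hterm2
  have hsqrtu : Real.sqrt (1 - u ^ 2) = 2 * Real.sqrt x / (x + 1) := by
    have h1 : 1 - u ^ 2 = (2 * Real.sqrt x / (x + 1)) ^ 2 := by
      rw [hu]
      field_simp
      nlinarith [hs2]
    rw [h1, Real.sqrt_sq (by positivity)]
  have heq : (2 * 1 * Real.sqrt x + 2 * (x - 1) * (1 / (2 * Real.sqrt x))) -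
      ((1 * x + (x - 6) * 1) * arccos u +
        (1 + (x - 6) * x) * ((-(1 / Real.sqrt (1 - u ^ 2))) * ((1 * (x + 1) - (x - 1) * 1) / (x + 1) ^ 2)))
      = 4 * Real.sqrt x * (x - 1) / (x + 1) + (6 - 2 * x) * arccos u := by
    rw [hsqrtu]
    exact deriv_alg hs2 hs (arccos u)
  rw [heq] at h
  exact h.congr_of_eventuallyEq (by filter_upwards with y; rfl)

lemma lamOne_strictMonoOn : StrictMonoOn lamOne (Set.Icc (0:ℝ) 1) := by
  apply strictMonoOn_of_deriv_pos (convex_Icc 0 1) lamOne_continuousOn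
  intro x hx
  rw [interior_Icc] at hx
  obtain ⟨hx0, hx1⟩ := hx
  rw [(lamOne_hasDerivAt hx0 hx1).deriv]
  set u : ℝ := (x - 1) / (x + 1) with hu
  have hx1p : (0:ℝ) < x + 1 := by linarith
  have hs : 0 < Real.sqrt x := Real.sqrt_pos.mpr hx0
  have hsle : Real.sqrt x ≤ 1 := by
    rw [show (1:ℝ) = Real.sqrt 1 by simp]
    exact Real.sqrt_le_sqrt hx1.le
  have hune : u ≤ 0 := by
    apply div_nonpos_of_nonpos_of_nonneg <;> linarith
  have hA : π / 2 ≤ arccos u := by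
    rw [Real.arccos_eq_pi_div_two_sub_arcsin]
    have := Real.arcsin_nonpos.mpr hune
    linarith
  have hpi : 3 < π := Real.pi_gt_three
  -- first term ≥ -4
  have h1 : -4 ≤ 4 * Real.sqrt x * (x - 1) / (x + 1) := by
    rw [le_div_iff₀ hx1p]
    nlinarith [hs.le, hsle]
  -- second term ≥ 4 * (π/2)
  have h2 : 4 * (π / 2) ≤ (6 - 2 * x) * arccos u := by
    have h6 : (4:ℝ) ≤ 6 - 2 * x := by linarith
    have hApos : 0 ≤ π / 2 := by positivity
    calc 4 * (π / 2) ≤ (6 - 2 * x) * (π / 2) := by nlinarith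
      _ ≤ (6 - 2 * x) * arccos u := by nlinarith
  linarith

lemma cos_lb {x : ℝ} (h : |x| ≤ 1) : 1 - x ^ 2 / 2 - |x| ^ 4 * (5 / 96) ≤ Real.cos x := by
  have := Real.cos_bound h
  have := abs_le.mp this
  linarith [this.1]

lemma cos_ub {x : ℝ} (h : |x| ≤ 1) : Real.cos x ≤ 1 - x ^ 2 / 2 + |x| ^ 4 * (5 / 96) := by
  have := Real.cos_bound h
  have := abs_le.mp this
  linarith [this.2]

lemma cos_double_lb {x l : ℝ} (h0 : 0 ≤ l) (h : l ≤ Real.cos x) :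
    2 * l ^ 2 - 1 ≤ Real.cos (2 * x) := by
  rw [Real.cos_two_mul]; nlinarith

lemma cos_double_ub {x l u : ℝ} (h0 : 0 ≤ l) (hl : l ≤ Real.cos x) (h : Real.cos x ≤ u) :
    Real.cos (2 * x) ≤ 2 * u ^ 2 - 1 := by
  rw [Real.cos_two_mul]; nlinarith

-- cos 0.884 ≥ 77/123
lemma cos_0884 : (77:ℝ)/123 ≤ Real.cos 0.884 := by
  have habs : |(0.221:ℝ)| ≤ 1 := by rw [abs_of_nonneg] <;> norm_num
  have hl0 : (0.975455:ℝ) ≤ Real.cos 0.221 := by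
    have := cos_lb habs
    rw [abs_of_nonneg (by norm_num : (0:ℝ) ≤ 0.221)] at this
    nlinarith
  have hl1 : (0.903024:ℝ) ≤ Real.cos (2 * 0.221) := by
    have := cos_double_lb (by norm_num : (0:ℝ) ≤ 0.975455) hl0
    nlinarith
  have hl2 : (0.630904:ℝ) ≤ Real.cos (2 * (2 * 0.221)) := by
    have := cos_double_lb (by norm_num : (0:ℝ) ≤ 0.903024) hl1
    nlinarith
  have : (2 : ℝ) * (2 * 0.221) = 0.884 := by norm_num
  rw [this] at hl2
  linarith

-- cos 0.919 ≤ 769/1231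
lemma cos_0919 : Real.cos 0.919 ≤ (769:ℝ)/1231 := by
  have habs : |(0.22975:ℝ)| ≤ 1 := by rw [abs_of_nonneg] <;> norm_num
  have h0 := cos_lb habs
  have h0' := cos_ub habs
  rw [abs_of_nonneg (by norm_num : (0:ℝ) ≤ 0.22975)] at h0 h0'
  have hl0 : (0.973462:ℝ) ≤ Real.cos 0.22975 := by nlinarith
  have hu0 : Real.cos 0.22975 ≤ 0.973753 := by nlinarith
  have hl1 : (0.895256:ℝ) ≤ Real.cos (2 * 0.22975) := by
    have := cos_double_lb (by norm_num : (0:ℝ) ≤ 0.973462) hl0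
    nlinarith
  have hu1 : Real.cos (2 * 0.22975) ≤ 0.89639 := by
    have := cos_double_ub (by norm_num : (0:ℝ) ≤ 0.973462) hl0 hu0
    nlinarith
  have hu2 : Real.cos (2 * (2 * 0.22975)) ≤ 2 * 0.89639 ^ 2 - 1 :=
    cos_double_ub (by norm_num : (0:ℝ) ≤ 0.895256) hl1 hu1
  have : (2 : ℝ) * (2 * 0.22975) = 0.919 := by norm_num
  rw [this] at hu2
  nlinarith

lemma arccos_antitone {a b : ℝ} (h : a ≤ b) : arccos b ≤ arccos a := by
  rw [Real.arccos_eq_pi_div_two_sub_arcsin, Real.arccos_eq_pi_div_two_sub_arcsin]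
  have := Real.monotone_arcsin h
  linarith

lemma A1_lb : (0.884:ℝ) ≤ arccos ((77:ℝ)/123) := by
  have h1 : arccos (Real.cos 0.884) = 0.884 := by
    apply Real.arccos_cos (by norm_num)
    linarith [Real.pi_gt_three]
  calc (0.884:ℝ) = arccos (Real.cos 0.884) := h1.symm
    _ ≤ arccos ((77:ℝ)/123) := arccos_antitone cos_0884

lemma A2_ub : arccos ((769:ℝ)/1231) ≤ 0.919 := by
  have h1 : arccos (Real.cos 0.919) = 0.919 := by
    apply Real.arccos_cos (by norm_num)
    linarith [Real.pi_gt_three]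
  calc arccos ((769:ℝ)/1231) ≤ arccos (Real.cos 0.919) := arccos_antitone cos_0919
    _ = 0.919 := by rw [h1]

lemma sqrt_023_lb : (0.47958:ℝ) ≤ Real.sqrt 0.23 := by
  rw [show (0.23:ℝ) = 0.23 from rfl]
  have : (0.47958:ℝ) = Real.sqrt (0.47958 ^ 2) := (Real.sqrt_sq (by norm_num)).symm
  rw [this]
  exact Real.sqrt_le_sqrt (by norm_num)

lemma sqrt_0231_ub : Real.sqrt 0.231 ≤ 0.480625 := by
  have : (0.480625:ℝ) = Real.sqrt (0.480625 ^ 2) := (Real.sqrt_sq (by norm_num)).symm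
  rw [this]
  exact Real.sqrt_le_sqrt (by norm_num)

lemma lamOne_neg : lamOne 0.23 < 0 := by
  unfold lamOne
  have h1 : ((0.23:ℝ) - 1) / (0.23 + 1) = -(77/123) := by norm_num
  rw [h1, Real.arccos_neg]
  have hA := A1_lb
  have hpi : π < 3.141593 := Real.pi_lt_d6
  have hs := sqrt_023_lb
  nlinarith [Real.arccos_nonneg ((77:ℝ)/123)]

lemma lamOne_pos : 0 < lamOne 0.231 := by
  unfold lamOne
  have h1 : ((0.231:ℝ) - 1) / (0.231 + 1) = -(769/1231) := by norm_num
  rw [h1, Real.arccos_neg]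
  have hA := A2_ub
  have hpi : 3.141592 < π := Real.pi_gt_d6
  have hs := sqrt_0231_ub
  nlinarith [Real.arccos_nonneg ((769:ℝ)/1231)]

theorem lambda_one_unique_zero :
    ∃ β₀ : ℝ, (0.23 < β₀ ∧ β₀ < 0.231 ∧ 0 < β₀ ∧ β₀ ≤ 1 ∧
        2 * (β₀ - 1) * Real.sqrt β₀ -
          (1 + (β₀ - 6) * β₀) * arccos ((β₀ - 1) / (β₀ + 1)) = 0) ∧
      ∀ β : ℝ, 0 < β → β ≤ 1 →
        2 * (β - 1) * Real.sqrt β -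
          (1 + (β - 6) * β) * arccos ((β - 1) / (β + 1)) = 0 → β = β₀ := by
  have hcont : ContinuousOn lamOne (Set.Icc (0.23:ℝ) 0.231) :=
    lamOne_continuousOn.mono (Set.Icc_subset_Icc (by norm_num) (by norm_num))
  have hivt := intermediate_value_Ioo (by norm_num : (0.23:ℝ) ≤ 0.231) hcont
  have h0mem : (0:ℝ) ∈ Set.Ioo (lamOne 0.23) (lamOne 0.231) := ⟨lamOne_neg, lamOne_pos⟩
  obtain ⟨β₀, hβ₀mem, hβ₀⟩ := hivt h0mem
  refine ⟨β₀, ⟨hβ₀mem.1, hβ₀mem.2, by linarith [hβ₀mem.1], by linarith [hβ₀mem.2], hβ₀⟩, ?_⟩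
  intro β hβ0 hβ1 hβ
  have hmem1 : β ∈ Set.Icc (0:ℝ) 1 := ⟨hβ0.le, hβ1⟩
  have hmem2 : β₀ ∈ Set.Icc (0:ℝ) 1 := ⟨by linarith [hβ₀mem.1], by linarith [hβ₀mem.2]⟩
  apply lamOne_strictMonoOn.injOn hmem1 hmem2
  show lamOne β = lamOne β₀
  unfold lamOne
  rw [hβ]
  exact hβ₀.symm
end
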